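/- Let f ∈ L²(0,1) be such that for all real numbers u, r, u', r' with 0 < u < u + r < u' < u' + r' < 1 one has (1/r)∫_u^{u+r} f(v) dv ≤ (1/r')∫_{u'}^{u'+r'} f(v) dv. Then there exists a non-decreasing, right-continuous function F : (0,1) → ℝ such that f(u) = F(u) for almost every u ∈ (0,1). -/

import Mathlib

open MeasureTheory Set Metric Filter

/-- Let `f ∈ L²(0,1)` be such that for all `0 < u < u+r < u' < u'+r' < 1`
one has `(1/r)∫_u^{u+r} f ≤ (1/r')∫_{u'}^{u'+r'} f`. Then there exists a non-decreasing,
right-continuous function `F : (0,1) → ℝ` with `f = F` almost everywhere on `(0,1)`. -/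
theorem stmt2 (f : ℝ → ℝ)
    (hf : MemLp f 2 (volume.restrict (Set.Ioo (0:ℝ) 1)))
    (hmono : ∀ u r u' r' : ℝ,
      0 < u → u < u + r → u + r < u' → u' < u' + r' → u' + r' < 1 →
      (1/r) * ∫ v in u..(u + r), f v ≤ (1/r') * ∫ v in u'..(u' + r'), f v) :
    ∃ F : ℝ → ℝ, MonotoneOn F (Set.Ioo 0 1) ∧
      (∀ u ∈ Set.Ioo (0:ℝ) 1, ContinuousWithinAt F (Set.Ici u) u) ∧
      ∀ᵐ u ∂(volume.restrict (Set.Ioo (0:ℝ) 1)), f u = F u := by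
  haveI : IsFiniteMeasure (volume.restrict (Set.Ioo (0:ℝ) 1)) :=
    ⟨by rw [Measure.restrict_apply_univ]; simp⟩
  have hInt : IntegrableOn f (Set.Ioo 0 1) volume := hf.integrable one_le_two
  set g : ℝ → ℝ := (Set.Ioo (0:ℝ) 1).indicator f with hg
  have hgint : Integrable g volume :=
    (integrable_indicator_iff measurableSet_Ioo).2 hInt
  have hgloc : LocallyIntegrable g volume := hgint.locallyIntegrable
  have hae : ∀ᵐ x ∂(volume : Measure ℝ), ∀ w δ : ℝ → ℝ,
      Tendsto δ (nhdsWithin 0 (Set.Ioi 0)) (nhdsWithin 0 (Set.Ioi 0)) →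
      (∀ᶠ j in nhdsWithin (0:ℝ) (Set.Ioi 0), x ∈ closedBall (w j) (3 * δ j)) →
      Tendsto (fun j => ⨍ y in closedBall (w j) (δ j), g y)
        (nhdsWithin (0:ℝ) (Set.Ioi 0)) (nhds (g x)) := by
    filter_upwards [IsUnifLocDoublingMeasure.ae_tendsto_average (μ := (volume : Measure ℝ))
      hgloc 3] with x hx w δ h1 h2
    exact hx w δ h1 h2
  have havg : ∀ a r : ℝ, 0 < r → 0 < a → a + 2*r < 1 →
      (1/(2*r)) * ∫ v in a..(a+2*r), f v = ⨍ y in closedBall (a+r) r, g y := by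
    intro a r hr ha h1
    rw [setAverage_eq, measureReal_def, Real.volume_closedBall, Real.closedBall_eq_Icc,
      integral_Icc_eq_integral_Ioc]
    have h1' : a + r - r = a := by ring
    have h2' : a + r + r = a + 2*r := by ring
    rw [h1', h2', intervalIntegral.integral_of_le (by linarith)]
    have hcong : ∫ v in Set.Ioc a (a+2*r), g v = ∫ v in Set.Ioc a (a+2*r), f v :=
      setIntegral_congr_fun measurableSet_Ioc (fun v hv =>
        Set.indicator_of_mem (Set.mem_Ioo.mpr ⟨by linarith [hv.1], by linarith [hv.2]⟩) f)
    rw [hcong, ENNReal.toReal_ofReal (by linarith), smul_eq_mul, one_div, inv_mul_eq_div,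
      div_eq_mul_inv, mul_comm]
  -- the set of averages over intervals strictly to the right of u
  set S : ℝ → Set ℝ := fun u =>
    {y | ∃ a s : ℝ, u < a ∧ 0 < s ∧ a + s < 1 ∧ y = (1/s) * ∫ v in a..(a+s), f v} with hS
  have hmem : ∀ u a s : ℝ, u < a → 0 < s → a + s < 1 →
      (1/s) * (∫ v in a..(a+s), f v) ∈ S u :=
    fun u a s h1 h2 h3 => ⟨a, s, h1, h2, h3, rfl⟩
  have hne : ∀ u : ℝ, u < 1 → (S u).Nonempty := by
    intro u hu
    exact ⟨_, hmem u ((u+1)/2) ((1-u)/4) (by linarith) (by linarith) (by linarith)⟩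
  have hlb : ∀ u b t : ℝ, 0 < b → 0 < t → b + t < u →
      (1/t) * (∫ v in b..(b+t), f v) ∈ lowerBounds (S u) := by
    rintro u b t hb ht hbt y ⟨a, s, h1, h2, h3, rfl⟩
    exact hmono b t a s hb (by linarith) (by linarith) (by linarith) h3
  have hbdd : ∀ u : ℝ, 0 < u → BddBelow (S u) := by
    intro u hu
    exact ⟨_, hlb u (u/2) (u/4) (by linarith) (by linarith) (by linarith)⟩
  refine ⟨fun u => sInf (S u), ?_, ?_, ?_⟩
  · -- monotone
    intro u hu v hv huv
    refine csInf_le_csInf (hbdd u hu.1) (hne v hv.2) ?_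
    rintro y ⟨a, s, h1, h2, h3, rfl⟩
    exact ⟨a, s, lt_of_le_of_lt huv h1, h2, h3, rfl⟩
  · -- right continuity
    intro u hu
    rw [ContinuousWithinAt, Metric.tendsto_nhdsWithin_nhds]
    intro ε hε
    obtain ⟨y, ⟨a, s, h1, h2, h3, rfl⟩, hy⟩ :=
      exists_lt_of_csInf_lt (hne u hu.2) (lt_add_of_pos_right (sInf (S u)) hε)
    refine ⟨a - u, by linarith, ?_⟩
    intro x hx hdist
    rw [Real.dist_eq] at hdist ⊢
    have hxa : x < a := by
      have := abs_lt.1 hdist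
      linarith [this.1, this.2]
    have hux : u ≤ x := hx
    have hFle : sInf (S x) ≤ (1/s) * ∫ v in a..(a+s), f v :=
      csInf_le (hbdd x (lt_of_lt_of_le hu.1 hux)) (hmem x a s hxa h2 h3)
    have hleF : sInf (S u) ≤ sInf (S x) := by
      refine csInf_le_csInf (hbdd u hu.1) ⟨_, hmem x a s hxa h2 h3⟩ ?_
      rintro z ⟨a', s', h1', h2', h3', rfl⟩
      exact ⟨a', s', lt_of_le_of_lt hux h1', h2', h3', rfl⟩
    rw [abs_lt]
    constructor <;> linarith
  · -- a.e. equality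
    filter_upwards [ae_restrict_of_ae hae, ae_restrict_mem measurableSet_Ioo] with u hu huI
    have hgu : g u = f u := Set.indicator_of_mem huI f
    have hu0 : 0 < u := huI.1
    have hu1 : u < 1 := huI.2
    -- upper bound : sInf (S u) ≤ f u
    have hup : sInf (S u) ≤ f u := by
      have hright := hu (fun r => u + 3*r) (fun r => r) tendsto_id ?_
      · refine le_of_tendsto_of_tendsto (tendsto_const_nhds) (hgu ▸ hright) ?_
        filter_upwards [Ioo_mem_nhdsGT_of_mem (Set.left_mem_Ico.2 (by linarith : (0:ℝ) < (1-u)/4))]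
          with r hr
        obtain ⟨hr0, hr4⟩ := hr
        have := havg (u + 2*r) r hr0 (by linarith) (by linarith)
        have hco : u + 3*r = (u + 2*r) + r := by ring
        rw [hco, ← this]
        exact csInf_le (hbdd u hu0)
          (by
            have := hmem u (u + 2*r) (2*r) (by linarith) (by linarith) (by linarith)
            convert this using 3)
      · filter_upwards [self_mem_nhdsWithin] with r hr
        rw [mem_closedBall, Real.dist_eq]
        have : (0:ℝ) < r := hr
        rw [abs_of_nonpos (by linarith)]
        linarith
    -- lower bound : f u ≤ sInf (S u)
    have hlo : f u ≤ sInf (S u) := by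
      have hleft := hu (fun r => u - 3*r) (fun r => r) tendsto_id ?_
      · refine le_of_tendsto_of_tendsto (hgu ▸ hleft) (tendsto_const_nhds) ?_
        filter_upwards [Ioo_mem_nhdsGT_of_mem (Set.left_mem_Ico.2 (by linarith : (0:ℝ) < u/4))]
          with r hr
        obtain ⟨hr0, hr4⟩ := hr
        have := havg (u - 4*r) r hr0 (by linarith) (by linarith)
        have hco : u - 3*r = (u - 4*r) + r := by ring
        rw [hco, ← this]
        refine le_csInf (hne u hu1) ?_
        rintro z ⟨a', s', h1', h2', h3', rfl⟩
        have key := hmono (u - 4*r) (2*r) a' s' (by linarith) (by linarith) (by linarith)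
          (by linarith) h3'
        have heq : u - 4*r + 2*r = (u - 4*r) + 2*r := by ring
        calc (1/(2*r)) * ∫ v in (u-4*r)..(u-4*r+2*r), f v
            ≤ (1/s') * ∫ v in a'..(a'+s'), f v := by
              convert key using 3
          _ = _ := rfl
      · filter_upwards [self_mem_nhdsWithin] with r hr
        rw [mem_closedBall, Real.dist_eq]
        have : (0:ℝ) < r := hr
        rw [abs_of_nonneg (by linarith)]
        linarith
    linarith
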